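/- Let A be a sign-singular 3×3 matrix over the tropical semiring. Then there exist a 3×2 real matrix P and a 2×3 real matrix Q such that the tropical product PQ equals A. -/

import Mathlib

/-- Tropical (min-plus) matrix product. -/
noncomputable def tropMul {l m o : Type*} [Fintype m] [Nonempty m]
    (A : Matrix l m ℝ) (B : Matrix m o ℝ) : Matrix l o ℝ :=
  fun i j => Finset.univ.inf' Finset.univ_nonempty fun t => A i t + B t j

/-- Evaluation of a word over `{x, y}` (here `true` stands for `x`, `false` for `y`)
as a tropical matrix product; the empty word evaluates to the junk value `A`. -/
noncomputable def evalWord {n : ℕ} [NeZero n] (A B : Matrix (Fin n) (Fin n) ℝ) :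
    List Bool → Matrix (Fin n) (Fin n) ℝ
  | [] => A
  | b :: t => t.foldl (fun M c => tropMul M (cond c A B)) (cond b A B)

/-- Tropical matrix power (`tropPow A k` is `A^k` for `k ≥ 1`; `A^0` is junk `= A`). -/
noncomputable def tropPow {n : ℕ} [NeZero n] (A : Matrix (Fin n) (Fin n) ℝ) (k : ℕ) :
    Matrix (Fin n) (Fin n) ℝ :=
  evalWord A A (List.replicate k true)

/-- Tropical permanent. -/
noncomputable def tropPerm {n : ℕ} (A : Matrix (Fin n) (Fin n) ℝ) : ℝ :=
  Finset.univ.inf' Finset.univ_nonempty fun σ : Equiv.Perm (Fin n) => ∑ i, A i (σ i)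

/-- `Σ(A)`: the set of permutations attaining the tropical permanent. -/
def minPerms {n : ℕ} (A : Matrix (Fin n) (Fin n) ℝ) : Set (Equiv.Perm (Fin n)) :=
  { σ | ∑ i, A i (σ i) = tropPerm A }

/-- A matrix is sign-nonsingular if all permutations in `Σ(A)` have the same parity. -/
def SignNonsingular {n : ℕ} (A : Matrix (Fin n) (Fin n) ℝ) : Prop :=
  ∀ σ ∈ minPerms A, ∀ τ ∈ minPerms A, Equiv.Perm.sign σ = Equiv.Perm.sign τ

/-- A matrix is sign-singular if `Σ(A)` contains two permutations of different parity. -/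
def SignSingular {n : ℕ} (A : Matrix (Fin n) (Fin n) ℝ) : Prop :=
  ∃ σ ∈ minPerms A, ∃ τ ∈ minPerms A, Equiv.Perm.sign σ ≠ Equiv.Perm.sign τ

/-- Similarity transformation determined by `s`. -/
def simTrans {n : ℕ} (s : Fin n → ℝ) (C : Matrix (Fin n) (Fin n) ℝ) :
    Matrix (Fin n) (Fin n) ℝ :=
  fun i j => C i j + s i - s j

/-- Diagonally `H`-dominant matrix. -/
def DiagDominant {n : ℕ} (H : ℝ) (A : Matrix (Fin n) (Fin n) ℝ) : Prop :=
  ∀ i j, A i j ≥ max (A i i) (A j j) + H * |A i i - A j j|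

/-- Diagonally `H`-dominant pair of matrices. -/
def DiagDomPair {n : ℕ} (H : ℝ) (A B : Matrix (Fin n) (Fin n) ℝ) : Prop :=
  (∀ i, A i i = B i i) ∧ DiagDominant H (fun i j => min (A i j) (B i j))


section Stmt6Aux

private lemma inf2' (f : Fin 2 → ℝ) :
    Finset.univ.inf' Finset.univ_nonempty f = min (f 0) (f 1) := by
  apply le_antisymm
  · exact le_min (Finset.inf'_le f (Finset.mem_univ 0)) (Finset.inf'_le f (Finset.mem_univ 1))
  · apply Finset.le_inf'
    intro i _
    fin_cases i
    · exact min_le_left _ _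
    · exact min_le_right _ _

private lemma tropMul_apply' (P : Matrix (Fin 3) (Fin 2) ℝ) (Q : Matrix (Fin 2) (Fin 3) ℝ)
    (i : Fin 3) (j : Fin 3) :
    tropMul P Q i j = min (P i 0 + Q 0 j) (P i 1 + Q 1 j) := inf2' _

private lemma tri' (p q r : Fin 3) (hpq : p ≠ q) (hpr : p ≠ r) (hqr : q ≠ r) (i : Fin 3) :
    i = p ∨ i = q ∨ i = r := by
  revert hpq hpr hqr; revert p q r i; decide

private lemma sum3' (f : Fin 3 → ℝ) (p q r : Fin 3) (hpq : p ≠ q) (hpr : p ≠ r) (hqr : q ≠ r) :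
    ∑ i, f i = f p + f q + f r := by
  have h : (Finset.univ : Finset (Fin 3)) = {p, q, r} :=
    (by decide : ∀ p q r : Fin 3, p ≠ q → p ≠ r → q ≠ r →
      (Finset.univ : Finset (Fin 3)) = {p, q, r}) p q r hpq hpr hqr
  rw [h, Finset.sum_insert (by simp [hpq, hpr]), Finset.sum_insert (by simp [hqr]),
    Finset.sum_singleton]
  ring

private lemma oddswap' : ∀ π : Equiv.Perm (Fin 3), Equiv.Perm.sign π = -1 →
    ∃ p q r : Fin 3, p ≠ q ∧ p ≠ r ∧ q ≠ r ∧ π = Equiv.swap p q := by decide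

/-- Core construction: if `B`, after subtracting row scalars `R` and column scalars `C`,
is normalized with zero 2×2 block (rows `p,q`, columns `p,q`, plus entry `(q,r)`),
nonnegative entries `(p,r), (r,p), (r,q)` and nonpositive entry `(r,r)`, then it factors. -/
private lemma norm_key' (B : Matrix (Fin 3) (Fin 3) ℝ) (p q r : Fin 3)
    (hpq : p ≠ q) (hpr : p ≠ r) (hqr : q ≠ r) (R C : Fin 3 → ℝ)
    (hPP : B p p = R p + C p) (hPQ : B p q = R p + C q)
    (hQP : B q p = R q + C p) (hQQ : B q q = R q + C q)
    (hQR : B q r = R q + C r)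
    (ha : R p + C r ≤ B p r) (hc : R r + C p ≤ B r p) (hd : R r + C q ≤ B r q)
    (he : B r r ≤ R r + C r) :
    ∃ (P : Matrix (Fin 3) (Fin 2) ℝ) (Q : Matrix (Fin 2) (Fin 3) ℝ), tropMul P Q = B := by
  set a := B p r - R p - C r with hA
  set c := B r p - R r - C p with hC
  set d := B r q - R r - C q with hD
  set e := B r r - R r - C r with hE
  set M := a + c + d - e with hM
  refine ⟨fun i => ![R i + (if i = r then M else 0),
      R i + (if i = p then M else if i = q then -e else 0)],
    ![fun j => C j + (if j = r then a else 0),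
      fun j => C j + (if j = p then c else if j = q then d else e)], ?_⟩
  funext i j
  refine (tropMul_apply' _ _ i j).trans ?_
  rcases tri' p q r hpq hpr hqr i with hi | hi | hi <;>
    rcases tri' p q r hpq hpr hqr j with hj | hj | hj <;> subst hi <;> subst hj <;>
    simp only [Matrix.cons_val_zero, Matrix.cons_val_one, Matrix.head_cons,
      if_pos rfl, if_neg hpq, if_neg hpr, if_neg hqr, if_true, ite_true, ite_false,
      if_neg (Ne.symm hpq), if_neg (Ne.symm hpr), if_neg (Ne.symm hqr)] <;>
    first
      | (rw [min_eq_left (by linarith)]; linarith)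
      | (rw [min_eq_right (by linarith)]; linarith)

/-- Half of `key3'`: assumes additionally `B q r - B q p + B p p ≤ B p r`. -/
private lemma key'' (B : Matrix (Fin 3) (Fin 3) ℝ) (p q r : Fin 3)
    (hpq : p ≠ q) (hpr : p ≠ r) (hqr : q ≠ r)
    (h1 : B p q + B q p = B p p + B q q)
    (h2 : B p p + B q q + B r r ≤ B p p + B q r + B r q)
    (h4 : B p p + B q q + B r r ≤ B p q + B q r + B r p)
    (hab : B q r - B q p + B p p ≤ B p r) :
    ∃ (P : Matrix (Fin 3) (Fin 2) ℝ) (Q : Matrix (Fin 2) (Fin 3) ℝ), tropMul P Q = B := by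
  set ρr := min (B r p - B p p) (B r q - B p q) with hρr
  refine norm_key' B p q r hpq hpr hqr
    (fun i => if i = p then 0 else if i = q then B q p - B p p else ρr)
    (fun j => if j = p then B p p else if j = q then B p q else B q r - B q p + B p p)
    ?_ ?_ ?_ ?_ ?_ ?_ ?_ ?_ ?_ <;>
    simp only [if_pos rfl, if_neg hpq, if_neg hpr, if_neg hqr, if_true, ite_true, ite_false,
      if_neg (Ne.symm hpq), if_neg (Ne.symm hpr), if_neg (Ne.symm hqr)]
  · ring
  · ring
  · ring
  · linarith
  · ring
  · linarith
  · linarith [min_le_left (B r p - B p p) (B r q - B p q)]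
  · linarith [min_le_right (B r p - B p p) (B r q - B p q)]
  · rcases min_cases (B r p - B p p) (B r q - B p q) with ⟨h, _⟩ | ⟨h, _⟩ <;>
      rw [hρr, h] <;> linarith

/-- If the identity and the transposition `(p q)` both attain the tropical permanent of
a 3×3 matrix `B`, then `B` factors tropically through `ℝ²`. -/
private lemma key3' (B : Matrix (Fin 3) (Fin 3) ℝ) (p q r : Fin 3)
    (hpq : p ≠ q) (hpr : p ≠ r) (hqr : q ≠ r)
    (h1 : B p q + B q p = B p p + B q q)
    (h2 : B p p + B q q + B r r ≤ B p p + B q r + B r q)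
    (h3 : B p p + B q q + B r r ≤ B p r + B q q + B r p)
    (h4 : B p p + B q q + B r r ≤ B p q + B q r + B r p)
    (h5 : B p p + B q q + B r r ≤ B p r + B q p + B r q) :
    ∃ (P : Matrix (Fin 3) (Fin 2) ℝ) (Q : Matrix (Fin 2) (Fin 3) ℝ), tropMul P Q = B := by
  rcases le_total (B q r - B q p + B p p) (B p r) with h | h
  · exact key'' B p q r hpq hpr hqr h1 h2 h4 h
  · exact key'' B q p r (Ne.symm hpq) hqr hpr (by linarith) (by linarith) (by linarith)
      (by linarith)

end Stmt6Aux

/-- A sign-singular tropical 3×3 matrix factors tropically as a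
3×2 matrix times a 2×3 matrix. -/
theorem stmt6 (A : Matrix (Fin 3) (Fin 3) ℝ) (hA : SignSingular A) :
    ∃ (P : Matrix (Fin 3) (Fin 2) ℝ) (Q : Matrix (Fin 2) (Fin 3) ℝ),
      tropMul P Q = A := by
  obtain ⟨σ, hσ, τ, hτ, hsign⟩ := hA
  -- the permutation `π = σ⁻¹ * τ` is odd, hence a transposition `(p q)` in `S₃`
  set π := σ⁻¹ * τ with hπ
  have hsπ : Equiv.Perm.sign π = -1 := by
    rcases Int.units_eq_one_or (Equiv.Perm.sign σ) with h | h <;>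
      rcases Int.units_eq_one_or (Equiv.Perm.sign τ) with h' | h' <;>
      first
        | exact absurd (h.trans h'.symm) hsign
        | simp [hπ, h, h']
  obtain ⟨p, q, r, hpq, hpr, hqr, hswap⟩ := oddswap' π hsπ
  -- `B` is `A` with columns permuted by `σ`; then `id` and `(p q)` attain its permanent
  set B : Matrix (Fin 3) (Fin 3) ℝ := fun i j => A i (σ j) with hB
  have Eid : B p p + B q q + B r r = tropPerm A := by
    rw [← sum3' (fun i => B i i) p q r hpq hpr hqr]
    exact hσ
  have Eπ : B p q + B q p + B r r = tropPerm A := by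
    have h : ∀ i, B i (π i) = A i (τ i) := by
      intro i
      simp [hB, hπ, Equiv.Perm.mul_apply]
    have htot := sum3' (fun i => B i (π i)) p q r hpq hpr hqr
    rw [hswap] at htot
    simp only [Equiv.swap_apply_left, Equiv.swap_apply_right,
      Equiv.swap_apply_of_ne_of_ne (Ne.symm hpr) (Ne.symm hqr)] at htot
    rw [← htot, ← hswap,
      show (∑ i, B i (π i)) = ∑ i, A i (τ i) from Finset.sum_congr rfl fun i _ => h i]
    exact hτ
  have Elow : ∀ ρ : Equiv.Perm (Fin 3), tropPerm A ≤ ∑ i, B i (ρ i) := by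
    intro ρ
    have h : (∑ i, B i (ρ i)) = ∑ i, A i ((σ * ρ) i) :=
      Finset.sum_congr rfl fun i _ => by simp [hB, Equiv.Perm.mul_apply]
    rw [h]
    exact Finset.inf'_le _ (Finset.mem_univ (σ * ρ))
  -- lower bounds from the four remaining permutations of `{p, q, r}`
  have S2 := Elow (Equiv.swap q r)
  rw [sum3' _ p q r hpq hpr hqr, Equiv.swap_apply_of_ne_of_ne hpq hpr,
    Equiv.swap_apply_left, Equiv.swap_apply_right] at S2
  have S3 := Elow (Equiv.swap p r)
  rw [sum3' _ p q r hpq hpr hqr, Equiv.swap_apply_left,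
    Equiv.swap_apply_of_ne_of_ne (Ne.symm hpq) hqr, Equiv.swap_apply_right] at S3
  have S4 := Elow (Equiv.swap p q * Equiv.swap q r)
  rw [sum3' _ p q r hpq hpr hqr] at S4
  simp only [Equiv.Perm.mul_apply, Equiv.swap_apply_of_ne_of_ne hpq hpr,
    Equiv.swap_apply_left, Equiv.swap_apply_right,
    Equiv.swap_apply_of_ne_of_ne (Ne.symm hpr) (Ne.symm hqr)] at S4
  have S5 := Elow (Equiv.swap q r * Equiv.swap p q)
  rw [sum3' _ p q r hpq hpr hqr] at S5
  simp only [Equiv.Perm.mul_apply, Equiv.swap_apply_left, Equiv.swap_apply_right,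
    Equiv.swap_apply_of_ne_of_ne hpq hpr,
    Equiv.swap_apply_of_ne_of_ne (Ne.symm hpr) (Ne.symm hqr)] at S5
  -- factor `B`, then un-permute the columns
  obtain ⟨P, Q, hPQ⟩ := key3' B p q r hpq hpr hqr (by linarith) (by linarith) (by linarith)
    (by linarith) (by linarith)
  refine ⟨P, fun k j => Q k (σ⁻¹ j), ?_⟩
  funext i j
  have h : tropMul P (fun k j => Q k (σ⁻¹ j)) i j = tropMul P Q i (σ⁻¹ j) := rfl
  rw [h, hPQ]
  simp [hB]
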